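/- Let K ⊂ ℝⁿ be a bounded open set with smooth boundary, h a polynomial vanishing on ∂K, f a homogeneous polynomial of degree d_f, and dμ = f dλ with λ Lebesgue measure. Then for every multi-index α, ∫_K [(n + d_f) x^α h(x) + ⟨x, ∇(x^α h)(x)⟩] f(x) dλ(x) = 0. -/

import Mathlib

open MeasureTheory MvPolynomial

/-- Every connected component of a bounded open subset of `ℝ` is an open interval
whose endpoints lie on the frontier. -/
lemma stmt10_comp_eq_Ioo (U : Set ℝ) (hUo : IsOpen U) (hUb : Bornology.IsBounded U)
    {x : ℝ} (hx : x ∈ U) :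
    ∃ a b : ℝ, a < b ∧ a ∈ frontier U ∧ b ∈ frontier U ∧
      connectedComponentIn U x = Set.Ioo a b := by
  set c := connectedComponentIn U x with hc
  have hco : IsOpen c := hUo.connectedComponentIn
  have hcsub : c ⊆ U := connectedComponentIn_subset U x
  have hxc : x ∈ c := mem_connectedComponentIn hx
  have hcb : Bornology.IsBounded c := hUb.subset hcsub
  have hbdd : BddAbove c := hcb.bddAbove
  have hbddb : BddBelow c := hcb.bddBelow
  have hne : c.Nonempty := ⟨x, hxc⟩
  have hord : c.OrdConnected := (isPreconnected_connectedComponentIn).ordConnected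
  set a := sInf c
  set b := sSup c
  have hsub : c ⊆ Set.Ioo a b := by
    intro y hy
    obtain ⟨ε, hε, hball⟩ := Metric.isOpen_iff.mp hco y hy
    rw [Real.ball_eq_Ioo] at hball
    constructor
    · have h1 : y - ε/2 ∈ c := hball ⟨by linarith, by linarith⟩
      have := csInf_le hbddb h1
      linarith
    · have h1 : y + ε/2 ∈ c := hball ⟨by linarith, by linarith⟩
      have := le_csSup hbdd h1
      linarith
  have hsup : Set.Ioo a b ⊆ c := by
    intro y hy
    obtain ⟨u, hu, hu2⟩ := exists_lt_of_csInf_lt hne hy.1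
    obtain ⟨v, hv, hv2⟩ := exists_lt_of_lt_csSup hne hy.2
    exact hord.out hu hv ⟨le_of_lt hu2, le_of_lt hv2⟩
  have hceq : c = Set.Ioo a b := le_antisymm hsub hsup
  have hab : a < b := by
    have := hsub hxc; exact lt_trans this.1 this.2
  refine ⟨a, b, hab, ?_, ?_, hceq⟩
  · rw [hUo.frontier_eq]
    constructor
    · exact closure_mono hcsub (csInf_mem_closure hne hbddb)
    · intro haU
      obtain ⟨ε, hε, hball⟩ := Metric.isOpen_iff.mp hUo a haU
      rw [Real.ball_eq_Ioo] at hball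
      have hsU : Set.Ioo (a - ε) b ⊆ U := by
        intro t ht
        rcases lt_or_ge t (a + ε) with h | h
        · exact hball ⟨ht.1, h⟩
        · exact hcsub (hsup ⟨by linarith, ht.2⟩)
      have hxs : x ∈ Set.Ioo (a - ε) b := by
        have := hsub hxc; exact ⟨by linarith [this.1], this.2⟩
      have : Set.Ioo (a - ε) b ⊆ c :=
        IsPreconnected.subset_connectedComponentIn isPreconnected_Ioo hxs hsU
      have : a ∈ c := this ⟨by linarith, hab⟩
      rw [hceq] at this
      exact lt_irrefl a this.1
  · rw [hUo.frontier_eq]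
    constructor
    · exact closure_mono hcsub (csSup_mem_closure hne hbdd)
    · intro hbU
      obtain ⟨ε, hε, hball⟩ := Metric.isOpen_iff.mp hUo b hbU
      rw [Real.ball_eq_Ioo] at hball
      have hsU : Set.Ioo a (b + ε) ⊆ U := by
        intro t ht
        rcases lt_or_ge (b - ε) t with h | h
        · exact hball ⟨h, ht.2⟩
        · exact hcsub (hsup ⟨ht.1, by linarith⟩)
      have hxs : x ∈ Set.Ioo a (b + ε) := by
        have := hsub hxc; exact ⟨this.1, by linarith [this.2]⟩
      have : Set.Ioo a (b + ε) ⊆ c :=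
        IsPreconnected.subset_connectedComponentIn isPreconnected_Ioo hxs hsU
      have : b ∈ c := this ⟨hab, by linarith⟩
      rw [hceq] at this
      exact lt_irrefl b this.2

/-- 1-dimensional FTC on a bounded open set for a function vanishing on the frontier. -/
lemma stmt10_oneDim (U : Set ℝ) (hUo : IsOpen U) (hUb : Bornology.IsBounded U)
    (ψ dψ : ℝ → ℝ) (hd : ∀ t, HasDerivAt ψ (dψ t) t) (hc : Continuous dψ)
    (h0 : ∀ t ∈ frontier U, ψ t = 0) :
    ∫ t in U, dψ t = 0 := by
  have hcomp : ∀ x ∈ U, ∫ t in connectedComponentIn U x, dψ t = 0 := by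
    intro x hx
    obtain ⟨a, b, hab, ha, hb, hceq⟩ := stmt10_comp_eq_Ioo U hUo hUb hx
    rw [hceq, ← MeasureTheory.integral_Ioc_eq_integral_Ioo,
      ← intervalIntegral.integral_of_le hab.le,
      intervalIntegral.integral_eq_sub_of_hasDerivAt (fun t _ => hd t)
        (hc.intervalIntegrable a b), h0 a ha, h0 b hb, sub_zero]
  set C : Set (Set ℝ) := {c | ∃ x ∈ U, c = connectedComponentIn U x} with hC
  have hCc : C.Countable := by
    apply Set.Countable.mono (s₁ := C)
      (s₂ := Set.range (fun q : {q : ℚ // (q : ℝ) ∈ U} => connectedComponentIn U (q : ℝ)))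
    · rintro c ⟨x, hx, rfl⟩
      obtain ⟨q, hq⟩ := Rat.denseRange_cast.exists_mem_open hUo.connectedComponentIn
        ⟨x, mem_connectedComponentIn hx⟩
      exact ⟨⟨q, connectedComponentIn_subset U x hq⟩, (connectedComponentIn_eq hq).symm⟩
    · exact Set.countable_range _
  haveI := hCc.to_subtype
  have hCopen : ∀ c : C, IsOpen (c : Set ℝ) := by
    rintro ⟨c, x, hx, rfl⟩; exact hUo.connectedComponentIn
  have hUnion : U = ⋃ c : C, (c : Set ℝ) := by
    apply Set.eq_of_subset_of_subset
    · intro x hx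
      exact Set.mem_iUnion.mpr ⟨⟨connectedComponentIn U x, ⟨x, hx, rfl⟩⟩,
        mem_connectedComponentIn hx⟩
    · rintro x hx
      obtain ⟨⟨c, y, hy, rfl⟩, hxc⟩ := Set.mem_iUnion.mp hx
      exact connectedComponentIn_subset U y hxc
  have hdisj : Pairwise (Function.onFun Disjoint fun c : C => (c : Set ℝ)) := by
    rintro ⟨c, x, hx, rfl⟩ ⟨c', y, hy, rfl⟩ hne
    simp only [Function.onFun]
    rw [Set.disjoint_left]
    intro z hz hz'
    apply hne
    apply Subtype.ext
    show connectedComponentIn U x = connectedComponentIn U y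
    rw [connectedComponentIn_eq hz, connectedComponentIn_eq hz']
  have hInt : IntegrableOn dψ U volume := by
    have : IsCompact (closure U) :=
      Metric.isCompact_of_isClosed_isBounded isClosed_closure hUb.closure
    exact (hc.continuousOn.integrableOn_compact this).mono_set subset_closure
  rw [hUnion] at hInt ⊢
  rw [MeasureTheory.integral_iUnion (fun c => (hCopen c).measurableSet) hdisj hInt]
  have : ∀ c : C, ∫ t in (c : Set ℝ), dψ t = 0 := by
    rintro ⟨c, x, hx, rfl⟩; exact hcomp x hx
  simp [this]

/-- Coordinatewise differentiation of a polynomial evaluation. -/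
lemma stmt10_hasDerivAt_eval_insertNth {m : ℕ} (i : Fin (m + 1)) (z : Fin m → ℝ)
    (P : MvPolynomial (Fin (m + 1)) ℝ) (t : ℝ) :
    HasDerivAt (fun s => eval (i.insertNth s z) P)
      (eval (i.insertNth t z) (pderiv i P)) t := by
  induction P using MvPolynomial.induction_on with
  | C a => simpa using hasDerivAt_const t a
  | add p q hp hq => simpa using hp.fun_add hq
  | mul_X p j hp =>
    rcases eq_or_ne j i with rfl | hne
    · have := hp.fun_mul (hasDerivAt_id' (x := t))
      simp only [eval_mul, eval_X, Fin.insertNth_apply_same, pderiv_mul, pderiv_X_self,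
        map_add, map_one, mul_one] at this ⊢
      convert this using 1
    · obtain ⟨k, hk⟩ := Fin.exists_succAbove_eq hne
      subst hk
      have := hp.mul_const (z k)
      simp only [eval_mul, eval_X, pderiv_mul, pderiv_X_of_ne hne, mul_zero, map_add,
        map_mul, map_zero, add_zero, Fin.insertNth_apply_succAbove] at this ⊢
      convert this using 1

lemma stmt10_frontier_preimage_subset {X Y : Type*} [TopologicalSpace X] [TopologicalSpace Y]
    {f : X → Y} (hf : Continuous f) (s : Set Y) :
    frontier (f ⁻¹' s) ⊆ f ⁻¹' (frontier s) := by
  rw [frontier_eq_closure_inter_closure, frontier_eq_closure_inter_closure]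
  intro x hx
  exact ⟨hf.closure_preimage_subset s hx.1,
    hf.closure_preimage_subset sᶜ (by simpa using hx.2)⟩

/-- The integral over a bounded open set of a partial derivative of a polynomial
vanishing on the frontier is zero. -/
lemma stmt10_integral_pderiv_eq_zero {m : ℕ} (K : Set (Fin (m + 1) → ℝ)) (hKo : IsOpen K)
    (hKb : Bornology.IsBounded K) (g : MvPolynomial (Fin (m + 1)) ℝ)
    (hg : ∀ x ∈ frontier K, eval x g = 0) (i : Fin (m + 1)) :
    ∫ x in K, eval x (pderiv i g) ∂volume = 0 := by
  set F : (Fin (m + 1) → ℝ) → ℝ := fun x => eval x (pderiv i g) with hF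
  set e := MeasurableEquiv.piFinSuccAbove (fun _ : Fin (m + 1) => ℝ) i with he
  have mp : MeasurePreserving e.symm volume volume :=
    (volume_preserving_piFinSuccAbove (fun _ : Fin (m + 1) => ℝ) i).symm
  have hsymm : ∀ y : ℝ × (Fin m → ℝ), e.symm y = i.insertNth y.1 y.2 := by
    intro y
    rw [MeasurableEquiv.piFinSuccAbove_symm_apply]
    rfl
  set S : Set (ℝ × (Fin m → ℝ)) := e.symm ⁻¹' K with hS
  have hSm : MeasurableSet S := hKo.measurableSet.preimage e.symm.measurable
  have h1 : ∫ x in K, F x ∂volume = ∫ y in S, F (e.symm y) ∂volume :=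
    (mp.setIntegral_preimage_emb e.symm.measurableEmbedding F K).symm
  have hIntK : IntegrableOn F K volume := by
    have hcomp : IsCompact (closure K) :=
      Metric.isCompact_of_isClosed_isBounded isClosed_closure hKb.closure
    exact ((continuous_eval _).continuousOn.integrableOn_compact hcomp).mono_set
      subset_closure
  have hIntS : Integrable (S.indicator (F ∘ e.symm)) volume := by
    rw [show S.indicator (F ∘ e.symm) = (K.indicator F) ∘ e.symm by
      funext y; exact Set.indicator_comp_right _]
    exact (mp.integrable_comp_emb e.symm.measurableEmbedding).mpr
      ((integrable_indicator_iff hKo.measurableSet).mpr hIntK)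
  have hIntS' : Integrable (S.indicator fun y => F (e.symm y))
      ((volume : Measure ℝ).prod volume) := by
    exact (by simpa [Function.comp_def] using hIntS :
      Integrable (S.indicator fun y => F (e.symm y)) volume)
  rw [h1, ← integral_indicator hSm]
  have h2 : (volume : Measure (ℝ × (Fin m → ℝ))) = Measure.prod volume volume := rfl
  rw [h2]
  rw [integral_prod_symm _ hIntS']
  have hinner : ∀ z : Fin m → ℝ,
      (∫ t : ℝ, S.indicator (fun y => F (e.symm y)) (t, z)) = 0 := by
    intro z
    set ins : ℝ → (Fin (m + 1) → ℝ) := fun t => i.insertNth t z with hins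
    have hcont : Continuous ins :=
      Continuous.finInsertNth (A := fun _ => ℝ) i continuous_id continuous_const
    set U : Set ℝ := ins ⁻¹' K with hU
    have hind : ∀ t : ℝ, S.indicator (fun y => F (e.symm y)) (t, z)
        = U.indicator (fun t => eval (ins t) (pderiv i g)) t := by
      intro t
      simp only [Set.indicator_apply, hS, Set.mem_preimage, hsymm]
      rfl
    simp only [hind]
    rw [integral_indicator (hKo.measurableSet.preimage hcont.measurable)]
    have hUo : IsOpen U := hKo.preimage hcont
    have hUb : Bornology.IsBounded U := by
      obtain ⟨R, hR⟩ := hKb.subset_closedBall 0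
      apply (Metric.isBounded_closedBall (x := (0:ℝ)) (r := R)).subset
      intro t ht
      have h3 : ins t ∈ Metric.closedBall 0 R := hR ht
      rw [Metric.mem_closedBall, dist_zero_right] at h3 ⊢
      calc ‖t‖ = ‖ins t i‖ := by simp [hins, Fin.insertNth_apply_same]
        _ ≤ ‖ins t‖ := norm_le_pi_norm _ i
        _ ≤ R := h3
    refine stmt10_oneDim U hUo hUb (fun t => eval (ins t) g) _
      (fun t => stmt10_hasDerivAt_eval_insertNth i z g t) ?_ ?_
    · exact continuous_iff_continuousAt.mpr fun t =>
        (stmt10_hasDerivAt_eval_insertNth i z (pderiv i g) t).continuousAt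
    · intro t ht
      exact hg _ (stmt10_frontier_preimage_subset hcont K ht)
  simp only [hinner, integral_zero]

lemma stmt10_euler_aux {n d : ℕ} (s : Fin n →₀ ℕ) (a : ℝ) (hd : s.degree = d) :
    ∑ i : Fin n, X i * pderiv i (monomial s a) = C (d : ℝ) * monomial s a := by
  have hterm : ∀ i : Fin n, X i * pderiv i (monomial s a) = monomial s (a * (s i : ℝ)) := by
    intro i
    rw [pderiv_monomial]
    rcases Nat.eq_zero_or_pos (s i) with h | h
    · simp [h]
    · have hle : Finsupp.single i 1 ≤ s := by
        rw [Finsupp.single_le_iff]; exact h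
      rw [X, monomial_mul, one_mul, add_tsub_cancel_of_le hle]
  rw [Finset.sum_congr rfl fun i _ => hterm i, C_mul_monomial]
  rw [← map_sum (monomial s) (fun i => a * (s i : ℝ)) Finset.univ, ← Finset.mul_sum]
  congr 1
  have : ∑ i : Fin n, (s i : ℝ) = (d : ℝ) := by
    rw [← hd, Finsupp.degree_apply]
    push_cast
    rw [(Finset.sum_subset (s.support.subset_univ) (fun i _ h => by simp at h; simp [h])).symm]
  rw [this, mul_comm]

/-- Euler's identity for homogeneous multivariate polynomials. -/
lemma stmt10_euler {n d : ℕ} {f : MvPolynomial (Fin n) ℝ} (hf : f.IsHomogeneous d) :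
    ∑ i : Fin n, X i * pderiv i f = C (d : ℝ) * f := by
  calc ∑ i : Fin n, X i * pderiv i f
      = ∑ i : Fin n, X i * pderiv i (∑ s ∈ f.support, monomial s (coeff s f)) := by
        rw [support_sum_monomial_coeff]
    _ = ∑ s ∈ f.support, ∑ i : Fin n, X i * pderiv i (monomial s (coeff s f)) := by
        simp_rw [map_sum, Finset.mul_sum]
        exact Finset.sum_comm
    _ = ∑ s ∈ f.support, C (d : ℝ) * monomial s (coeff s f) := by
        refine Finset.sum_congr rfl fun s hs => stmt10_euler_aux s _ ?_
        have := hf (MvPolynomial.mem_support_iff.mp hs)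
        rw [Finsupp.degree_eq_weight_one]; exact this
    _ = C (d : ℝ) * f := by rw [← Finset.mul_sum, support_sum_monomial_coeff]

/-- Stokes for the measure dμ = f dλ with f homogeneous of degree d_f:
∫_K [(n + d_f) x^α h + ⟨x, ∇(x^α h)⟩] f dλ = 0. -/
theorem stmt_10 (n : ℕ) (K : Set (Fin n → ℝ)) (hKo : IsOpen K)
    (hKb : Bornology.IsBounded K) (hKs : volume (frontier K) = 0)
    (h : MvPolynomial (Fin n) ℝ)
    (hvanish : ∀ x ∈ frontier K, eval x h = 0)
    (f : MvPolynomial (Fin n) ℝ) (df : ℕ) (hf : f.IsHomogeneous df)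
    (α : Fin n → ℕ) :
    ∫ x in K,
      (((n : ℝ) + df) * eval x ((∏ j, X j ^ α j) * h)
        + ∑ i, x i * eval x (pderiv i ((∏ j, X j ^ α j) * h))) * eval x f
      ∂volume = 0 := by
  set q : MvPolynomial (Fin n) ℝ := (∏ j, X j ^ α j) * h with hq
  have heuler : ∀ x : Fin n → ℝ, ∑ i, x i * eval x (pderiv i f) = (df : ℝ) * eval x f := by
    intro x
    have := congrArg (eval x) (stmt10_euler hf)
    simpa [map_sum, eval_mul, eval_X, eval_C] using this
  have hpt : ∀ x : Fin n → ℝ,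
      (((n : ℝ) + df) * eval x q + ∑ i, x i * eval x (pderiv i q)) * eval x f
      = ∑ i, eval x (pderiv i (X i * (q * f))) := by
    intro x
    simp only [pderiv_mul, pderiv_X_self, one_mul, map_add, map_mul, eval_X]
    rw [Finset.sum_add_distrib, Finset.sum_const, Finset.card_univ, Fintype.card_fin]
    simp_rw [mul_add, Finset.sum_add_distrib, ← mul_assoc]
    rw [← Finset.sum_mul]
    have h4 : ∑ i : Fin n, x i * eval x q * eval x (pderiv i f)
        = eval x q * ((df : ℝ) * eval x f) := by
      rw [← heuler x, Finset.mul_sum]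
      exact Finset.sum_congr rfl fun i _ => by ring
    rw [h4, nsmul_eq_mul]
    ring
  rw [MeasureTheory.setIntegral_congr_fun hKo.measurableSet
    (fun x _ => hpt x)]
  have hIntP : ∀ P : MvPolynomial (Fin n) ℝ, IntegrableOn (fun x => eval x P) K volume := by
    intro P
    have hcomp : IsCompact (closure K) :=
      Metric.isCompact_of_isClosed_isBounded isClosed_closure hKb.closure
    exact ((continuous_eval _).continuousOn.integrableOn_compact hcomp).mono_set
      subset_closure
  rw [MeasureTheory.integral_finset_sum _
    (fun i _ => hIntP (pderiv i (X i * (q * f))))]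
  rcases n with _ | m
  · simp
  · refine Finset.sum_eq_zero fun i _ => ?_
    refine stmt10_integral_pderiv_eq_zero K hKo hKb _ ?_ i
    intro x hx
    simp [hq, eval_mul, hvanish x hx]
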